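/- Let v_1, …, v_m be unit vectors in ℂ^d with m ≥ 1, let Π_i = v_i v_i* and S = Σ_{i=1}^m Π_i, and suppose S is positive definite. Let F = max_{i≠j} |⟨v_i, v_j⟩| and assume 4(m−1)F² ≤ 1. Then the worst-case success probability of the Pretty Good Measurement satisfies min_{1≤i≤m} Tr(S^{−1/2} Π_i S^{−1/2} Π_i) ≥ (1 − 4(m−1)F²)² / (1 + mF²). -/

import Mathlib

open Matrix ComplexOrder

/-- The positive semidefinite square root (Mathlib's former `Matrix.PosSemidef.sqrt`). -/
noncomputable def Matrix.PosSemidef.sqrt {n 𝕜 : Type*} [Fintype n] [DecidableEq n] [RCLike 𝕜]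
    {A : Matrix n n 𝕜} (hA : A.PosSemidef) : Matrix n n 𝕜 :=
  (hA.1.eigenvectorUnitary : Matrix n n 𝕜) *
    diagonal ((fun x : ℝ => (x : 𝕜)) ∘ (√·) ∘ hA.1.eigenvalues) *
    (star hA.1.eigenvectorUnitary : Matrix n n 𝕜)

lemma Matrix.PosSemidef.posSemidef_sqrt {n 𝕜 : Type*} [Fintype n] [DecidableEq n] [RCLike 𝕜]
    {A : Matrix n n 𝕜} (hA : A.PosSemidef) : hA.sqrt.PosSemidef := by
  have hd : PosSemidef (diagonal ((fun x : ℝ => (x : 𝕜)) ∘ (√·) ∘ hA.1.eigenvalues)) :=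
    posSemidef_diagonal_iff.mpr fun i => by
      simp only [Function.comp_apply]
      exact RCLike.ofReal_nonneg.mpr (Real.sqrt_nonneg _)
  have := hd.mul_mul_conjTranspose_same (hA.1.eigenvectorUnitary : Matrix n n 𝕜)
  rw [Matrix.PosSemidef.sqrt, star_eq_conjTranspose]
  exact this

lemma Matrix.PosSemidef.sqrt_mul_self {n 𝕜 : Type*} [Fintype n] [DecidableEq n] [RCLike 𝕜]
    {A : Matrix n n 𝕜} (hA : A.PosSemidef) : hA.sqrt * hA.sqrt = A := by
  have hU : (star hA.1.eigenvectorUnitary : Matrix n n 𝕜) *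
      (hA.1.eigenvectorUnitary : Matrix n n 𝕜) = 1 := Unitary.coe_star_mul_self _
  have hD : diagonal ((fun x : ℝ => (x : 𝕜)) ∘ (√·) ∘ hA.1.eigenvalues) *
      diagonal ((fun x : ℝ => (x : 𝕜)) ∘ (√·) ∘ hA.1.eigenvalues) =
      diagonal (RCLike.ofReal ∘ hA.1.eigenvalues) := by
    rw [diagonal_mul_diagonal]
    congr 1
    funext i
    simp only [Function.comp_apply]
    rw [← RCLike.ofReal_mul, Real.mul_self_sqrt (hA.eigenvalues_nonneg i)]
  conv_rhs => rw [hA.1.spectral_theorem, Unitary.conjStarAlgAut_apply]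
  rw [Matrix.PosSemidef.sqrt, ← hD]
  simp only [mul_assoc]
  rw [← mul_assoc (star hA.1.eigenvectorUnitary : Matrix n n 𝕜), hU, one_mul]

lemma aux_cs {d : ℕ} (x y : Fin d → ℂ) :
    ‖star x ⬝ᵥ y‖ ^ 2 ≤ (star x ⬝ᵥ x).re * (star y ⬝ᵥ y).re := by
  let x' : EuclideanSpace ℂ (Fin d) := WithLp.toLp 2 x
  let y' : EuclideanSpace ℂ (Fin d) := WithLp.toLp 2 y
  have hxy : (inner ℂ x' y' : ℂ) = star x ⬝ᵥ y := by
    simp [x', y', PiLp.inner_apply, dotProduct, RCLike.inner_apply, mul_comm]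
  have hxx : (inner ℂ x' x' : ℂ).re = (star x ⬝ᵥ x).re := by
    simp [x', -inner_self_eq_norm_sq_to_K, PiLp.inner_apply, dotProduct, RCLike.inner_apply, mul_comm]
  have hyy : (inner ℂ y' y' : ℂ).re = (star y ⬝ᵥ y).re := by
    simp [y', -inner_self_eq_norm_sq_to_K, PiLp.inner_apply, dotProduct, RCLike.inner_apply, mul_comm]
  have h1 : ‖(inner ℂ x' y' : ℂ)‖ ≤ ‖x'‖ * ‖y'‖ := norm_inner_le_norm x' y'
  have h2 : RCLike.re (inner ℂ x' x' : ℂ) = ‖x'‖ ^ 2 := inner_self_eq_norm_sq x'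
  have h3 : RCLike.re (inner ℂ y' y' : ℂ) = ‖y'‖ ^ 2 := inner_self_eq_norm_sq y'
  rw [← hxy, ← hxx, ← hyy]
  have := mul_le_mul h1 h1 (norm_nonneg _) (by positivity)
  calc ‖(inner ℂ x' y' : ℂ)‖ ^ 2 = ‖(inner ℂ x' y' : ℂ)‖ * ‖(inner ℂ x' y' : ℂ)‖ := by
        ring
    _ ≤ (‖x'‖ * ‖y'‖) * (‖x'‖ * ‖y'‖) := this
    _ = (inner ℂ x' x' : ℂ).re * (inner ℂ y' y' : ℂ).re := by
        simp only [RCLike.re_to_complex] at h2 h3 ⊢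
        rw [h2, h3]; ring

lemma aux_mul_vecMulVec {d : ℕ} (M : Matrix (Fin d) (Fin d) ℂ) (a b : Fin d → ℂ) :
    M * vecMulVec a b = vecMulVec (M *ᵥ a) b := by
  ext i j
  simp [mul_apply, vecMulVec_apply, mulVec, dotProduct, Finset.sum_mul, mul_assoc]

lemma aux_vecMulVec_mul_vecMulVec {d : ℕ} (a b c e : Fin d → ℂ) :
    vecMulVec a b * vecMulVec c e = (b ⬝ᵥ c) • vecMulVec a e := by
  ext i j
  simp only [mul_apply, vecMulVec_apply, dotProduct, Matrix.smul_apply, smul_eq_mul, Finset.sum_mul]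
  exact Finset.sum_congr rfl fun k _ => by ring

lemma aux_trace_vecMulVec {d : ℕ} (a b : Fin d → ℂ) :
    trace (vecMulVec a b) = b ⬝ᵥ a := by
  simp [trace, diag, vecMulVec_apply, dotProduct, mul_comm]

lemma aux_trace_form {d : ℕ} (A : Matrix (Fin d) (Fin d) ℂ) (u : Fin d → ℂ) :
    trace (A * vecMulVec u (star u) * A * vecMulVec u (star u)) =
      (star u ⬝ᵥ A *ᵥ u) * (star u ⬝ᵥ A *ᵥ u) := by
  rw [mul_assoc (A * vecMulVec u (star u)) A, aux_mul_vecMulVec A,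
    aux_vecMulVec_mul_vecMulVec, trace_smul, aux_trace_vecMulVec]
  simp [smul_eq_mul, mul_comm]

lemma aux_dot_mulVec {d : ℕ} (M N : Matrix (Fin d) (Fin d) ℂ) (u w : Fin d → ℂ) :
    star (M *ᵥ u) ⬝ᵥ (N *ᵥ w) = star u ⬝ᵥ (Mᴴ * N) *ᵥ w := by
  rw [star_mulVec, dotProduct_mulVec, vecMul_vecMul, ← dotProduct_mulVec]

lemma aux_sum_mulVec {d m : ℕ} (M : Fin m → Matrix (Fin d) (Fin d) ℂ) (u : Fin d → ℂ) :
    (∑ j, M j) *ᵥ u = ∑ j, M j *ᵥ u := by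
  ext k
  simp only [mulVec, dotProduct, Finset.sum_apply, Matrix.sum_apply, Finset.sum_mul]
  rw [Finset.sum_comm]

lemma aux_dotProduct_sum {d m : ℕ} (u : Fin d → ℂ) (f : Fin m → Fin d → ℂ) :
    u ⬝ᵥ (∑ j, f j) = ∑ j, u ⬝ᵥ f j := by
  simp only [dotProduct, Finset.sum_apply, Finset.mul_sum]
  rw [Finset.sum_comm]

lemma aux_vecMulVec_mulVec {d : ℕ} (a b u : Fin d → ℂ) :
    vecMulVec a b *ᵥ u = (b ⬝ᵥ u) • a := by
  ext k
  simp only [mulVec, vecMulVec_apply, dotProduct, Pi.smul_apply, smul_eq_mul, Finset.sum_mul]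
  exact Finset.sum_congr rfl fun j _ => by ring

/-- Key Cauchy–Schwarz bounds, with `C` an opaque positive semidefinite square root of `S`. -/
lemma aux_bounds {d : ℕ} (S C : Matrix (Fin d) (Fin d) ℂ)
    (hCpsd : C.PosSemidef) (hCC : C * C = S) (hCdet : IsUnit C.det)
    (u : Fin d → ℂ) (hu : star u ⬝ᵥ u = 1) :
    (0 ≤ (star u ⬝ᵥ C⁻¹ *ᵥ u).re ∧ (star u ⬝ᵥ C⁻¹ *ᵥ u).im = 0) ∧
      1 ≤ (star u ⬝ᵥ C⁻¹ *ᵥ u).re * (star u ⬝ᵥ C *ᵥ u).re ∧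
      ((star u ⬝ᵥ C *ᵥ u).re) ^ 2 ≤ (star u ⬝ᵥ S *ᵥ u).re ∧
      0 ≤ (star u ⬝ᵥ C *ᵥ u).re := by
  have hApsd : (C⁻¹).PosSemidef := hCpsd.inv
  have hAinv : (C⁻¹)⁻¹ = C := nonsing_inv_nonsing_inv C hCdet
  have hAC : C⁻¹ * C = 1 := nonsing_inv_mul C hCdet
  have hAdet : IsUnit (C⁻¹).det := IsUnit.of_mul_eq_one C.det (by rw [← det_mul, hAC, det_one])
  have hBpsd : hApsd.sqrt.PosSemidef := hApsd.posSemidef_sqrt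
  set B : Matrix (Fin d) (Fin d) ℂ := hApsd.sqrt with hBdefn
  have hBB : B * B = C⁻¹ := hApsd.sqrt_mul_self
  have hBdet : IsUnit B.det := by
    have h : B.det * B.det = (C⁻¹).det := by rw [← det_mul, hBB]
    exact isUnit_of_mul_isUnit_left (h ▸ hAdet)
  have hBmul : B * B⁻¹ = 1 := mul_nonsing_inv B hBdet
  have hBH : Bᴴ = B := hBpsd.isHermitian
  have hBinvH : B⁻¹ᴴ = B⁻¹ := by rw [conjTranspose_nonsing_inv, hBH]
  have hBinvBinv : B⁻¹ * B⁻¹ = C := by rw [← Matrix.mul_inv_rev, hBB, hAinv]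
  have ht0 : (0 : ℂ) ≤ star u ⬝ᵥ C⁻¹ *ᵥ u := hApsd.dotProduct_mulVec_nonneg u
  have hs0 : (0 : ℂ) ≤ star u ⬝ᵥ C *ᵥ u := hCpsd.dotProduct_mulVec_nonneg u
  obtain ⟨htre, htim⟩ := Complex.nonneg_iff.mp ht0
  obtain ⟨hsre, hsim⟩ := Complex.nonneg_iff.mp hs0
  refine ⟨⟨htre, htim.symm⟩, ?_, ?_, hsre⟩
  · -- Cauchy–Schwarz with x = B u, y = B⁻¹ u
    have h1 : star (B *ᵥ u) ⬝ᵥ (B⁻¹ *ᵥ u) = 1 := by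
      rw [aux_dot_mulVec, hBH, hBmul, one_mulVec, hu]
    have h2 : star (B *ᵥ u) ⬝ᵥ (B *ᵥ u) = star u ⬝ᵥ C⁻¹ *ᵥ u := by
      rw [aux_dot_mulVec, hBH, hBB]
    have h3 : star (B⁻¹ *ᵥ u) ⬝ᵥ (B⁻¹ *ᵥ u) = star u ⬝ᵥ C *ᵥ u := by
      rw [aux_dot_mulVec, hBinvH, hBinvBinv]
    have := aux_cs (B *ᵥ u) (B⁻¹ *ᵥ u)
    rw [h1, h2, h3] at this
    simpa using this
  · -- Cauchy–Schwarz with x = u, y = C u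
    have h2 : star (C *ᵥ u) ⬝ᵥ (C *ᵥ u) = star u ⬝ᵥ S *ᵥ u := by
      rw [aux_dot_mulVec, hCpsd.isHermitian, hCC]
    have hcs := aux_cs u (C *ᵥ u)
    rw [h2, hu] at hcs
    have habs : ‖star u ⬝ᵥ C *ᵥ u‖ ^ 2 = (star u ⬝ᵥ C *ᵥ u).re ^ 2 := by
      rw [Complex.sq_norm, Complex.normSq_apply, hsim.symm]
      ring
    rw [habs] at hcs
    simpa using hcs

lemma aux_arith (m F r s q : ℝ) (hm1 : 1 ≤ m) (hF0 : 0 ≤ F)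
    (hsmall : 4 * (m - 1) * F ^ 2 ≤ 1) (hr : 0 ≤ r) (hs : 0 ≤ s)
    (h1 : 1 ≤ r * s) (h2 : s ^ 2 ≤ q) (h3 : q ≤ 1 + (m - 1) * F ^ 2) :
    (1 - 4 * (m - 1) * F ^ 2) ^ 2 / (1 + m * F ^ 2) ≤ r ^ 2 := by
  have ha0 : 0 ≤ (m - 1) * F ^ 2 := by nlinarith [sq_nonneg F]
  have hspos : 0 < s := by nlinarith
  have hqpos : 0 < q := by nlinarith
  have hkey : 1 ≤ r ^ 2 * q := by
    nlinarith [mul_le_mul_of_nonneg_left h2 (sq_nonneg r), sq_nonneg (r * s - 1)]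
  have hden : (0 : ℝ) < 1 + m * F ^ 2 := by nlinarith [sq_nonneg F]
  rw [div_le_iff₀ hden]
  nlinarith [mul_le_mul_of_nonneg_left h3 (sq_nonneg r), sq_nonneg r,
    mul_nonneg (sq_nonneg r) (sq_nonneg F), sq_nonneg F,
    mul_nonneg ha0 (sub_nonneg.mpr hsmall)]

/-- Improved lower bound for the worst-case Pretty Good Measurement: for `m ≥ 1` unit
vectors `v₁, …, vₘ` in `ℂ^d` with `Πᵢ = vᵢ vᵢ*`, `S = Σᵢ Πᵢ` positive definite, pairwise
overlaps at most `F`, and `4(m−1)F² ≤ 1`, the worst-case PGM success probability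
satisfies `min_i Tr(S^{−1/2} Πᵢ S^{−1/2} Πᵢ) ≥ (1 − 4(m−1)F²)² / (1 + mF²)`. -/
theorem worst_case_pgm_lower_bound {d m : ℕ} (hm : 1 ≤ m)
    (v : Fin m → (Fin d → ℂ))
    (hv : ∀ i, star (v i) ⬝ᵥ v i = 1)
    (S : Matrix (Fin d) (Fin d) ℂ)
    (hSdef : S = ∑ i, vecMulVec (v i) (star (v i)))
    (hS : S.PosDef)
    (F : ℝ) (hF0 : 0 ≤ F)
    (hF : ∀ i j, i ≠ j → ‖star (v i) ⬝ᵥ v j‖ ≤ F)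
    (hsmall : 4 * ((m : ℝ) - 1) * F ^ 2 ≤ 1) :
    (1 - 4 * ((m : ℝ) - 1) * F ^ 2) ^ 2 / (1 + m * F ^ 2) ≤
      ⨅ i : Fin m, (Matrix.trace ((hS.posSemidef.sqrt)⁻¹ * vecMulVec (v i) (star (v i)) *
        (hS.posSemidef.sqrt)⁻¹ * vecMulVec (v i) (star (v i)))).re := by
  haveI : Nonempty (Fin m) := ⟨⟨0, hm⟩⟩
  have hm1 : (1 : ℝ) ≤ (m : ℝ) := by exact_mod_cast hm
  have hCpsd : (hS.posSemidef.sqrt).PosSemidef := hS.posSemidef.posSemidef_sqrt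
  have hCC : hS.posSemidef.sqrt * hS.posSemidef.sqrt = S := hS.posSemidef.sqrt_mul_self
  have hSdet : IsUnit S.det := (isUnit_iff_isUnit_det S).mp hS.isUnit
  have hCdet : IsUnit (hS.posSemidef.sqrt).det := by
    have h : (hS.posSemidef.sqrt).det * (hS.posSemidef.sqrt).det = S.det := by
      rw [← det_mul, hCC]
    exact isUnit_of_mul_isUnit_left (h ▸ hSdet)
  refine le_ciInf fun i => ?_
  obtain ⟨⟨htre, htim⟩, h1, h2, hsre⟩ :=
    aux_bounds S (hS.posSemidef.sqrt) hCpsd hCC hCdet (v i) (hv i)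
  -- overlap bound
  have hq : (star (v i) ⬝ᵥ S *ᵥ (v i)).re ≤ 1 + ((m : ℝ) - 1) * F ^ 2 := by
    have hexp : star (v i) ⬝ᵥ S *ᵥ (v i)
        = ∑ j, (Complex.normSq (star (v j) ⬝ᵥ (v i)) : ℂ) := by
      rw [hSdef, aux_sum_mulVec, aux_dotProduct_sum]
      refine Finset.sum_congr rfl fun j _ => ?_
      rw [aux_vecMulVec_mulVec, dotProduct_smul, smul_eq_mul]
      have hconj : star (v i) ⬝ᵥ v j = star (star (v j) ⬝ᵥ (v i)) := by
        rw [star_dotProduct]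
      rw [hconj, Complex.star_def, Complex.mul_conj]
    have hre : (star (v i) ⬝ᵥ S *ᵥ (v i)).re = ∑ j, Complex.normSq (star (v j) ⬝ᵥ (v i)) := by
      rw [hexp]; push_cast; simp
    rw [hre]
    have hsplit : ∑ j, Complex.normSq (star (v j) ⬝ᵥ (v i))
        = Complex.normSq (star (v i) ⬝ᵥ (v i))
          + ∑ j ∈ Finset.univ.erase i, Complex.normSq (star (v j) ⬝ᵥ (v i)) :=
      (Finset.add_sum_erase _ _ (Finset.mem_univ i)).symm
    rw [hsplit, hv i]
    have hrest : ∑ j ∈ Finset.univ.erase i, Complex.normSq (star (v j) ⬝ᵥ (v i))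
        ≤ ((m : ℝ) - 1) * F ^ 2 := by
      have hcard : (Finset.univ.erase i).card = m - 1 := by
        rw [Finset.card_erase_of_mem (Finset.mem_univ i), Finset.card_univ, Fintype.card_fin]
      calc ∑ j ∈ Finset.univ.erase i, Complex.normSq (star (v j) ⬝ᵥ (v i))
          ≤ ∑ _j ∈ Finset.univ.erase i, F ^ 2 := by
            refine Finset.sum_le_sum fun j hj => ?_
            have hji : j ≠ i := Finset.ne_of_mem_erase hj
            rw [← Complex.sq_norm]
            nlinarith [norm_nonneg (star (v j) ⬝ᵥ (v i)), hF j i hji]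
        _ = ((m : ℝ) - 1) * F ^ 2 := by
            rw [Finset.sum_const, hcard, nsmul_eq_mul]
            congr 1
            rw [Nat.cast_sub hm]
            norm_num
    simp only [Complex.normSq_one]
    linarith
  rw [aux_trace_form]
  have hmul : ((star (v i) ⬝ᵥ (hS.posSemidef.sqrt)⁻¹ *ᵥ (v i)) *
      (star (v i) ⬝ᵥ (hS.posSemidef.sqrt)⁻¹ *ᵥ (v i))).re
      = (star (v i) ⬝ᵥ (hS.posSemidef.sqrt)⁻¹ *ᵥ (v i)).re ^ 2 := by
    rw [Complex.mul_re, htim]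
    ring
  rw [hmul]
  exact aux_arith m F _ _ _ hm1 hF0 hsmall htre hsre h1 h2 hq
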